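/- arXiv:1605.00254 — 2 statements merged into one kernel-verified Lean document; each statement's English description precedes it below -/
import Mathlib

section
/- Let H be a group, ω a normalized 3-cocycle on H with multiplicative phase θ, X a subgroup of H, and B a subgroup of H such that x⁻¹bx ∈ B and xbx⁻¹ ∈ B for all x ∈ X, b ∈ B. Assume θ_j(b,x) = 1, θ_j(x,b) = 1, and θ_j(b,b′) = 1 for all j ∈ H, x ∈ X, b, b′ ∈ B. Then θ_j(xb, yc) = θ_j(x,y) for all j ∈ H, x, y ∈ X, and b, c ∈ B. -/
/-- The multiplicative phase `θ_g(x,y)` of a 3-cocycle `ω`. -/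
noncomputable def theta {H : Type*} [Group H] (ω : H → H → H → ℂ) (g x y : H) : ℂ :=
  ω g x y * ω x y ((x * y)⁻¹ * g * (x * y)) / ω x (x⁻¹ * g * x) y

lemma theta_mul {H : Type*} [Group H] (ω : H → H → H → ℂ)
    (hne : ∀ a b c : H, ω a b c ≠ 0)
    (hcoc : ∀ a b c d : H,
      ω a b c * ω a (b * c) d * ω b c d = ω (a * b) c d * ω a b (c * d))
    (g x y z : H) :
    theta ω g (x * y) z * theta ω g x y =
      theta ω (x⁻¹ * g * x) y z * theta ω g x (y * z) := by
  have h1 := hcoc g x y z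
  have h2 := hcoc x (x⁻¹ * g * x) y z
  have h3 := hcoc x y ((x * y)⁻¹ * g * (x * y)) z
  have h4 := hcoc x y z ((x * y * z)⁻¹ * g * (x * y * z))
  have E3 : x * (x⁻¹ * g * x) = g * x := by group
  have E4 : y * ((x * y)⁻¹ * g * (x * y)) = x⁻¹ * g * x * y := by group
  have E5 : z * ((x * y * z)⁻¹ * g * (x * y * z)) = (x * y)⁻¹ * g * (x * y) * z := by group
  rw [E3] at h2
  rw [E4] at h3
  rw [E5] at h4
  have E1 : (y * z)⁻¹ * (x⁻¹ * g * x) * (y * z) = (x * y * z)⁻¹ * g * (x * y * z) := by group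
  have E2 : y⁻¹ * (x⁻¹ * g * x) * y = (x * y)⁻¹ * g * (x * y) := by group
  have E6 : (x * (y * z))⁻¹ * g * (x * (y * z)) = (x * y * z)⁻¹ * g * (x * y * z) := by group
  simp only [theta]
  rw [E1, E2, E6]
  have hF := hne x (x⁻¹ * g * x) y
  have hL := hne (x * y) ((x * y)⁻¹ * g * (x * y)) z
  have hK := hne y ((x * y)⁻¹ * g * (x * y)) z
  have hI := hne x (x⁻¹ * g * x) (y * z)
  have hG : ω x (x⁻¹ * g * x * y) z ≠ 0 := hne _ _ _
  rw [div_mul_div_comm, div_mul_div_comm,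
    div_eq_div_iff (mul_ne_zero hL hF) (mul_ne_zero hK hI)]
  apply mul_left_cancel₀ hG
  linear_combination
    (ω x (x⁻¹ * g * x) (y * z) * ω (x * y) ((x * y)⁻¹ * g * (x * y)) z *
      ω x (y * z) ((x * y * z)⁻¹ * g * (x * y * z)) *
      ω y z ((x * y * z)⁻¹ * g * (x * y * z))) * h1
    - (ω g x (y * z) * ω (x * y) ((x * y)⁻¹ * g * (x * y)) z *
      ω x (y * z) ((x * y * z)⁻¹ * g * (x * y * z)) *
      ω y z ((x * y * z)⁻¹ * g * (x * y * z))) * h2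
    + (ω g x y * ω g (x * y) z * ω (x * y) z ((x * y * z)⁻¹ * g * (x * y * z)) *
      ω x (x⁻¹ * g * x) (y * z)) * h3
    - (ω g x y * ω g (x * y) z * ω x (x⁻¹ * g * x) (y * z) *
      ω (x * y) ((x * y)⁻¹ * g * (x * y)) z) * h4

/-- Let `X` be a subgroup of `H` and `B` a subgroup of `H` closed under conjugation by
elements of `X`.  If the multiplicative phase `θ` of a normalized 3-cocycle `ω` is trivial
on `H × B × X`, `H × X × B` and `H × B × B`, then `θ_j(xb, yc) = θ_j(x,y)` for all `j ∈ H`,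
`x, y ∈ X` and `b, c ∈ B`. -/
theorem theta_quot {H : Type*} [Group H] (ω : H → H → H → ℂ)
    (habs : ∀ a b c : H, ‖ω a b c‖ = 1)
    (hcoc : ∀ a b c d : H,
      ω a b c * ω a (b * c) d * ω b c d = ω (a * b) c d * ω a b (c * d))
    (hnorm : ∀ g h : H, ω g 1 h = 1)
    (X B : Subgroup H)
    (hconj : ∀ x ∈ X, ∀ b ∈ B, x⁻¹ * b * x ∈ B ∧ x * b * x⁻¹ ∈ B)
    (hBX : ∀ j : H, ∀ b ∈ B, ∀ x ∈ X, theta ω j b x = 1)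
    (hXB : ∀ j : H, ∀ x ∈ X, ∀ b ∈ B, theta ω j x b = 1)
    (hBB : ∀ j : H, ∀ b ∈ B, ∀ b' ∈ B, theta ω j b b' = 1) :
    ∀ j : H, ∀ x ∈ X, ∀ y ∈ X, ∀ b ∈ B, ∀ c ∈ B,
      theta ω j (x * b) (y * c) = theta ω j x y := by
  have hne : ∀ a b c : H, ω a b c ≠ 0 := by
    intro a b c h0
    have := habs a b c
    rw [h0] at this
    simp at this
  intro j x hx y hy b hb c hc
  have tm := theta_mul ω hne hcoc
  have hb' : y⁻¹ * b * y ∈ B := (hconj y hy b hb).1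
  have hb'c : (y⁻¹ * b * y) * c ∈ B := mul_mem hb' hc
  have hxy : x * y ∈ X := mul_mem hx hy
  -- step 1
  have t1 := tm j x b (y * c)
  rw [hXB j x hx b hb, mul_one] at t1
  -- step 2
  have t2 := tm (x⁻¹ * j * x) b y c
  rw [hBX _ b hb y hy, mul_one, hXB _ y hy c hc, one_mul] at t2
  -- step 3
  have t3 := tm (x⁻¹ * j * x) y (y⁻¹ * b * y) c
  rw [hXB _ y hy _ hb', mul_one, hBB _ _ hb' c hc, one_mul,
    hXB _ y hy _ hb'c] at t3
  have e1 : y * (y⁻¹ * b * y) = b * y := by group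
  rw [e1] at t3
  -- step 4
  have t4 := tm j x y ((y⁻¹ * b * y) * c)
  rw [hXB j (x * y) hxy _ hb'c, one_mul, hXB (x⁻¹ * j * x) y hy _ hb'c, one_mul] at t4
  have e2 : b * (y * c) = y * ((y⁻¹ * b * y) * c) := by group
  rw [t1, ← t2, t3, one_mul, e2, ← t4]
end

section
/- Let H be a group, ω a normalized 3-cocycle on H with multiplicative phase θ, X a subgroup of H, and B a subgroup of H such that x⁻¹bx ∈ B and xbx⁻¹ ∈ B for all x ∈ X, b ∈ B. Assume θ_j(b,x) = 1, θ_j(x,b) = 1, and θ_j(b,b′) = 1 for all j ∈ H, x ∈ X, b, b′ ∈ B. Then θ_j(xb, c) = 1 and θ_j(b, yc) = 1 for all j ∈ H, x, y ∈ X, and b, c ∈ B. -/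
lemma theta_cocycle {H : Type*} [Group H] (ω : H → H → H → ℂ)
    (hne : ∀ a b c : H, ω a b c ≠ 0)
    (hcoc : ∀ a b c d : H,
      ω a b c * ω a (b * c) d * ω b c d = ω (a * b) c d * ω a b (c * d))
    (g x y z : H) :
    theta ω g x y * theta ω g (x * y) z
      = theta ω g x (y * z) * theta ω (x⁻¹ * g * x) y z := by
  have E1 := hcoc g x y z
  have E2 := hcoc x (x⁻¹ * g * x) y z
  have E3 := hcoc x y ((x * y)⁻¹ * g * (x * y)) z
  have E4 := hcoc x y z ((x * y * z)⁻¹ * g * (x * y * z))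
  rw [show x * (x⁻¹ * g * x) = g * x by group] at E2
  rw [show y * ((x * y)⁻¹ * g * (x * y)) = x⁻¹ * g * x * y by group] at E3
  rw [show z * ((x * y * z)⁻¹ * g * (x * y * z)) = (x * y)⁻¹ * g * (x * y) * z by group] at E4
  simp only [theta]
  rw [show (x * (y * z))⁻¹ * g * (x * (y * z)) = (x * y * z)⁻¹ * g * (x * y * z) by group,
    show (y * z)⁻¹ * (x⁻¹ * g * x) * (y * z) = (x * y * z)⁻¹ * g * (x * y * z) by group,
    show y⁻¹ * (x⁻¹ * g * x) * y = (x * y)⁻¹ * g * (x * y) by group]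
  have hKK : ω x y z * ω x (x⁻¹ * g * x * y) z * ω (g * x) y z
      * ω x y ((x * y)⁻¹ * g * (x * y) * z) ≠ 0 :=
    mul_ne_zero (mul_ne_zero (mul_ne_zero (hne _ _ _) (hne _ _ _)) (hne _ _ _)) (hne _ _ _)
  rw [div_mul_div_comm, div_mul_div_comm,
    div_eq_div_iff (mul_ne_zero (hne _ _ _) (hne _ _ _)) (mul_ne_zero (hne _ _ _) (hne _ _ _))]
  apply mul_right_cancel₀ hKK
  linear_combination
    (ω (g * x) y z * ω x (x⁻¹ * g * x) (y * z) * ω (x * y) z ((x * y * z)⁻¹ * g * (x * y * z))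
      * ω x y ((x * y)⁻¹ * g * (x * y) * z) * ω x y ((x * y)⁻¹ * g * (x * y))
      * ω x (x⁻¹ * g * x * y) z * ω y ((x * y)⁻¹ * g * (x * y)) z) * E1
    + (ω (g * x) y z * ω x (x⁻¹ * g * x) (y * z) * ω (x * y) z ((x * y * z)⁻¹ * g * (x * y * z))
      * ω x y ((x * y)⁻¹ * g * (x * y) * z) * ω (g * x) y z * ω g x (y * z)) * E3
    - (ω (g * x) y z * ω g x (y * z) * ω (x * y) ((x * y)⁻¹ * g * (x * y)) z
      * ω x y ((x * y)⁻¹ * g * (x * y) * z) * ω x y z * ω x (y * z) ((x * y * z)⁻¹ * g * (x * y * z))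
      * ω y z ((x * y * z)⁻¹ * g * (x * y * z))) * E2
    - (ω (g * x) y z * ω g x (y * z) * ω (x * y) ((x * y)⁻¹ * g * (x * y)) z
      * ω x y ((x * y)⁻¹ * g * (x * y) * z) * ω (g * x) y z * ω x (x⁻¹ * g * x) (y * z)) * E4

/-- Let `X` be a subgroup of `H` and `B` a subgroup of `H` closed under conjugation by
elements of `X`.  If the multiplicative phase `θ` of a normalized 3-cocycle `ω` is trivial
on `H × B × X`, `H × X × B` and `H × B × B`, then `θ_j(xb, c) = 1` and `θ_j(b, yc) = 1` for all `j ∈ H`,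
`x, y ∈ X` and `b, c ∈ B`. -/
theorem theta_quot_vanish {H : Type*} [Group H] (ω : H → H → H → ℂ)
    (habs : ∀ a b c : H, ‖ω a b c‖ = 1)
    (hcoc : ∀ a b c d : H,
      ω a b c * ω a (b * c) d * ω b c d = ω (a * b) c d * ω a b (c * d))
    (hnorm : ∀ g h : H, ω g 1 h = 1)
    (X B : Subgroup H)
    (hconj : ∀ x ∈ X, ∀ b ∈ B, x⁻¹ * b * x ∈ B ∧ x * b * x⁻¹ ∈ B)
    (hBX : ∀ j : H, ∀ b ∈ B, ∀ x ∈ X, theta ω j b x = 1)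
    (hXB : ∀ j : H, ∀ x ∈ X, ∀ b ∈ B, theta ω j x b = 1)
    (hBB : ∀ j : H, ∀ b ∈ B, ∀ b' ∈ B, theta ω j b b' = 1) :
    ∀ j : H, ∀ x ∈ X, ∀ y ∈ X, ∀ b ∈ B, ∀ c ∈ B,
      theta ω j (x * b) c = 1 ∧ theta ω j b (y * c) = 1 := by
  have hne : ∀ a b c : H, ω a b c ≠ 0 := by
    intro a b c h
    simpa [h] using habs a b c
  have key : ∀ j : H, ∀ x ∈ X, ∀ b ∈ B, ∀ c ∈ B, theta ω j (x * b) c = 1 := by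
    intro j x hx b hb c hc
    have h := theta_cocycle ω hne hcoc j x b c
    rw [hXB j x hx b hb, hXB j x hx (b * c) (mul_mem hb hc),
      hBB (x⁻¹ * j * x) b hb c hc, one_mul, one_mul] at h
    exact h
  intro j x hx y hy b hb c hc
  refine ⟨key j x hx b hb c hc, ?_⟩
  have h := theta_cocycle ω hne hcoc j b y c
  have hby : b * y = y * (y⁻¹ * b * y) := by group
  rw [hBX j b hb y hy, one_mul, hXB (b⁻¹ * j * b) y hy c hc, mul_one, hby,
    key j y hy (y⁻¹ * b * y) (hconj y hy b hb).1 c hc] at h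
  exact h.symm
end
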